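/- Let X, Y be jointly Gaussian standard normal random variables with correlation r ∈ [0,1). Then P(X > u, Y > u) ≤ exp(−u²/(1+r)) for all u ≥ 0, up to a constant: specifically P(X > u, Y > u) ≤ (1+r)² / (u²·2π√(1−r²)) · exp(−u²/(1+r)) for u > 0. -/

import Mathlib

open MeasureTheory ProbabilityTheory Set Real

open Filter in
private lemma aux_int {b : ℝ} (hb : 0 < b) (u : ℝ) :
    ∫ x in Ioi u, x * Real.exp (-b * x ^ 2) = Real.exp (-b * u ^ 2) / (2 * b) := by
  have hderiv : ∀ x ∈ Ici u, HasDerivAt (fun x => -(2 * b)⁻¹ * Real.exp (-b * x ^ 2))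
      (x * Real.exp (-b * x ^ 2)) x := by
    intro x _
    have h1 : HasDerivAt (fun x : ℝ => -b * x ^ 2) (-b * (2 * x)) x := by
      simpa using ((hasDerivAt_pow 2 x).const_mul (-b))
    have := (h1.exp).const_mul (-(2 * b)⁻¹)
    convert this using 1
    · rfl
    · rfl
    field_simp
  have hint : IntegrableOn (fun x => x * Real.exp (-b * x ^ 2)) (Ioi u) :=
    (integrable_mul_exp_neg_mul_sq hb).integrableOn
  have htend : Tendsto (fun x => -(2 * b)⁻¹ * Real.exp (-b * x ^ 2)) atTop (nhds 0) := by
    have : Tendsto (fun x : ℝ => Real.exp (-b * x ^ 2)) atTop (nhds 0) := by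
      apply Real.tendsto_exp_atBot.comp
      have : Tendsto (fun x : ℝ => x ^ 2) atTop atTop := tendsto_pow_atTop (by norm_num)
      exact this.const_mul_atTop_of_neg (neg_neg_iff_pos.mpr hb)
    simpa using this.const_mul (-(2 * b)⁻¹)
  have := integral_Ioi_of_hasDerivAt_of_tendsto' hderiv hint htend
  rw [this]
  field_simp
  ring

/-- If `(X, Y)` is a centered bivariate Gaussian vector with unit
variances and correlation `r ∈ [0,1)` (expressed via its joint density with
respect to Lebesgue measure on `ℝ²`), then for `u > 0`,
`P(X > u, Y > u) ≤ (1+r)² / (u²·2π√(1−r²)) · exp(−u²/(1+r))`. -/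
theorem stmt_13 {Ω : Type*} [MeasureSpace Ω] [IsProbabilityMeasure (ℙ : Measure Ω)]
    (X Y : Ω → ℝ) (hXY : Measurable fun ω => (X ω, Y ω))
    (r : ℝ) (hr0 : 0 ≤ r) (hr1 : r < 1)
    (hlaw : Measure.map (fun ω => (X ω, Y ω)) ℙ
      = (volume : Measure (ℝ × ℝ)).withDensity (fun p => ENNReal.ofReal
          ((2 * π * Real.sqrt (1 - r ^ 2))⁻¹ *
            Real.exp (-(p.1 ^ 2 - 2 * r * p.1 * p.2 + p.2 ^ 2) / (2 * (1 - r ^ 2))))))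
    (u : ℝ) (hu : 0 < u) :
    (ℙ {ω | u < X ω ∧ u < Y ω}).toReal
      ≤ (1 + r) ^ 2 / (u ^ 2 * (2 * π) * Real.sqrt (1 - r ^ 2)) *
          Real.exp (-u ^ 2 / (1 + r)) := by
  have hπ := Real.pi_pos
  have hr2 : 0 < 1 - r ^ 2 := by nlinarith
  have hsq : 0 < Real.sqrt (1 - r ^ 2) := Real.sqrt_pos.mpr hr2
  set C : ℝ := (2 * π * Real.sqrt (1 - r ^ 2))⁻¹ with hC
  have hCpos : 0 < C := by positivity
  have h1r : 0 < 1 + r := by linarith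
  set b : ℝ := (2 * (1 + r))⁻¹ with hb
  have hbpos : 0 < b := by positivity
  set g : ℝ → ENNReal := fun x => ENNReal.ofReal (x * Real.exp (-b * x ^ 2)) with hg
  have hgmeas : Measurable g :=
    (measurable_id.mul (((measurable_id.pow_const 2).const_mul (-b)).exp)).ennreal_ofReal
  set f : ℝ × ℝ → ℝ := fun p =>
    C * Real.exp (-(p.1 ^ 2 - 2 * r * p.1 * p.2 + p.2 ^ 2) / (2 * (1 - r ^ 2))) with hf
  have hSm : MeasurableSet (Ioi u ×ˢ Ioi u : Set (ℝ × ℝ)) :=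
    measurableSet_Ioi.prod measurableSet_Ioi
  have key : ℙ {ω | u < X ω ∧ u < Y ω} = ∫⁻ p in Ioi u ×ˢ Ioi u, ENNReal.ofReal (f p) := by
    have hS : {ω | u < X ω ∧ u < Y ω} = (fun ω => (X ω, Y ω)) ⁻¹' (Ioi u ×ˢ Ioi u) := by
      ext ω; simp [Set.mem_prod]
    rw [hS, ← Measure.map_apply hXY hSm, hlaw, withDensity_apply _ hSm]
  -- pointwise bound on the quadrant
  have hpt : ∀ p ∈ (Ioi u ×ˢ Ioi u : Set (ℝ × ℝ)),
      ENNReal.ofReal (f p) ≤ ENNReal.ofReal (C / u ^ 2) * (g p.1 * g p.2) := by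
    rintro ⟨x, y⟩ ⟨hx, hy⟩
    simp only [mem_Ioi] at hx hy
    have hx0 : 0 < x := hu.trans hx
    have hy0 : 0 < y := hu.trans hy
    have step1 : f (x, y) ≤ C / u ^ 2 * (x * Real.exp (-b * x ^ 2) * (y * Real.exp (-b * y ^ 2))) := by
      have hexp : Real.exp (-(x ^ 2 - 2 * r * x * y + y ^ 2) / (2 * (1 - r ^ 2)))
          ≤ Real.exp (-b * x ^ 2) * Real.exp (-b * y ^ 2) := by
        rw [← Real.exp_add]
        apply Real.exp_le_exp.mpr
        have key2 : (x ^ 2 + y ^ 2) / (2 * (1 + r))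
            ≤ (x ^ 2 - 2 * r * x * y + y ^ 2) / (2 * (1 - r ^ 2)) := by
          rw [div_le_div_iff₀ (by positivity) (by positivity)]
          nlinarith [sq_nonneg (x - y)]
        have hrw : -b * x ^ 2 + -b * y ^ 2 = -((x ^ 2 + y ^ 2) / (2 * (1 + r))) := by
          rw [hb]; field_simp; ring
        rw [hrw, neg_div, neg_le_neg_iff]
        exact key2
      have h1 : f (x, y) ≤ C * (Real.exp (-b * x ^ 2) * Real.exp (-b * y ^ 2)) :=
        mul_le_mul_of_nonneg_left hexp hCpos.le
      have h2 : C * (Real.exp (-b * x ^ 2) * Real.exp (-b * y ^ 2))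
          ≤ C / u ^ 2 * (x * Real.exp (-b * x ^ 2) * (y * Real.exp (-b * y ^ 2))) := by
        have hxy : u ^ 2 ≤ x * y := by nlinarith
        rw [div_mul_eq_mul_div, le_div_iff₀ (by positivity)]
        have h3 := mul_le_mul_of_nonneg_left hxy
          (show (0:ℝ) ≤ C * (Real.exp (-b * x ^ 2) * Real.exp (-b * y ^ 2)) from by positivity)
        nlinarith [h3]
      exact h1.trans h2
    calc ENNReal.ofReal (f (x, y))
        ≤ ENNReal.ofReal (C / u ^ 2 * (x * Real.exp (-b * x ^ 2) * (y * Real.exp (-b * y ^ 2)))) :=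
          ENNReal.ofReal_le_ofReal step1
      _ = ENNReal.ofReal (C / u ^ 2) * (g x * g y) := by
          rw [ENNReal.ofReal_mul (by positivity), ENNReal.ofReal_mul (by positivity)]
  -- factor integral
  have hfactor : ∫⁻ x in Ioi u, g x = ENNReal.ofReal (Real.exp (-b * u ^ 2) / (2 * b)) := by
    rw [← aux_int hbpos u, ← ofReal_integral_eq_lintegral_ofReal
      ((integrable_mul_exp_neg_mul_sq hbpos).integrableOn)]
    filter_upwards [self_mem_ae_restrict (measurableSet_Ioi : MeasurableSet (Ioi u))] with x hx
    have : 0 < x := hu.trans hx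
    positivity
  have chain : ℙ {ω | u < X ω ∧ u < Y ω}
      ≤ ENNReal.ofReal (C / u ^ 2) *
        (ENNReal.ofReal (Real.exp (-b * u ^ 2) / (2 * b)) *
         ENNReal.ofReal (Real.exp (-b * u ^ 2) / (2 * b))) := by
    rw [key]
    calc ∫⁻ p in Ioi u ×ˢ Ioi u, ENNReal.ofReal (f p)
        ≤ ∫⁻ p in Ioi u ×ˢ Ioi u, ENNReal.ofReal (C / u ^ 2) * (g p.1 * g p.2) :=
          setLIntegral_mono (measurable_const.mul
            ((hgmeas.comp measurable_fst).mul (hgmeas.comp measurable_snd))) hpt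
      _ = ENNReal.ofReal (C / u ^ 2) * ∫⁻ p in Ioi u ×ˢ Ioi u, g p.1 * g p.2 := by
          rw [lintegral_const_mul' _ _ ENNReal.ofReal_ne_top]
      _ = ENNReal.ofReal (C / u ^ 2) *
            ((∫⁻ x in Ioi u, g x) * ∫⁻ y in Ioi u, g y) := by
          rw [Measure.volume_eq_prod, ← Measure.prod_restrict,
            lintegral_prod_mul hgmeas.aemeasurable hgmeas.aemeasurable]
      _ = _ := by rw [hfactor]
  -- final arithmetic
  have hfinal : ENNReal.ofReal (C / u ^ 2) *
      (ENNReal.ofReal (Real.exp (-b * u ^ 2) / (2 * b)) *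
       ENNReal.ofReal (Real.exp (-b * u ^ 2) / (2 * b)))
      = ENNReal.ofReal ((1 + r) ^ 2 / (u ^ 2 * (2 * π) * Real.sqrt (1 - r ^ 2)) *
          Real.exp (-u ^ 2 / (1 + r))) := by
    rw [← ENNReal.ofReal_mul (by positivity), ← ENNReal.ofReal_mul (by positivity)]
    congr 1
    have he : Real.exp (-b * u ^ 2) * Real.exp (-b * u ^ 2) = Real.exp (-u ^ 2 / (1 + r)) := by
      rw [← Real.exp_add]
      congr 1
      rw [hb]
      field_simp
      ring
    have h2b : (2 * b) = (1 + r)⁻¹ := by rw [hb]; field_simp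
    rw [div_mul_div_comm, he, h2b, hC]
    rw [eq_comm, div_mul_eq_mul_div, div_eq_iff (by positivity)]
    field_simp
  refine ENNReal.toReal_le_of_le_ofReal (by positivity) ?_
  rw [← hfinal]
  exact chain
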